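/- Let n ≥ 3, let K ⊆ ℝⁿ be a proper subdual cone, let A ∈ ℝ^{n×n} be symmetric, and let {v¹, …, vⁿ} be an orthonormal system of eigenvectors of A with A vⁱ = λᵢ vⁱ and λ₁ < λ₂ ≤ ⋯ ≤ λₙ. Set θᵢ = (λᵢ − λ₂)/(λ₂ − λ₁) for i = 2, …, n and L_{λ₂} = {x ∈ ℝⁿ : ⟨v¹, x⟩ ≥ √(θ₂⟨v², x⟩² + ⋯ + θₙ⟨vⁿ, x⟩²)}. Suppose λ₂ ≤ (λ₁ + λ₃)/2 and that λ₂Iₙ − A is K-copositive. If K ∩ (−L_{λ₂}) = {0} or K ∩ L_{λ₂} = {0}, then the sublevel set [φ_A ≤ c] = {x ∈ int(K) : ⟨Ax, x⟩ ≤ c‖x‖²} is convex for every c ∈ ℝ (i.e., q_A is spherically quasi-convex). -/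

import Mathlib

open scoped RealInnerProductSpace

/-- The quadratic form `x ↦ ⟨A x, x⟩` associated with a matrix `A`. -/
noncomputable def quadForm {n : ℕ} (A : Matrix (Fin n) (Fin n) ℝ)
    (x : EuclideanSpace ℝ (Fin n)) : ℝ :=
  ⟪Matrix.toEuclideanLin A x, x⟫

/-- `K` is a cone: closed under multiplication by positive scalars. -/
def IsCone {n : ℕ} (K : Set (EuclideanSpace ℝ (Fin n))) : Prop :=
  ∀ ⦃t : ℝ⦄, 0 < t → ∀ ⦃x⦄, x ∈ K → t • x ∈ K

/-- A proper cone: a pointed closed convex cone with nonempty interior. -/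
def IsProperCone {n : ℕ} (K : Set (EuclideanSpace ℝ (Fin n))) : Prop :=
  IsCone K ∧ Convex ℝ K ∧ IsClosed K ∧ K ∩ (-K) ⊆ {0} ∧ (interior K).Nonempty

/-- The dual cone `K* = {u : ⟨u, y⟩ ≥ 0 for all y ∈ K}`. -/
def dualCone {n : ℕ} (K : Set (EuclideanSpace ℝ (Fin n))) : Set (EuclideanSpace ℝ (Fin n)) :=
  {u | ∀ y ∈ K, 0 ≤ ⟪u, y⟫}

/-- The sublevel set `[φ_A ≤ c] = {x ∈ int K : ⟨A x, x⟩ ≤ c ‖x‖²}`. -/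
noncomputable def sublevel {n : ℕ} (A : Matrix (Fin n) (Fin n) ℝ)
    (K : Set (EuclideanSpace ℝ (Fin n))) (c : ℝ) : Set (EuclideanSpace ℝ (Fin n)) :=
  {x ∈ interior K | quadForm A x ≤ c * ‖x‖ ^ 2}

/-- The elliptic cone `L = {x : √(∑_{i≥2} θᵢ ⟨vⁱ, x⟩²) ≤ ⟨v¹, x⟩}`. -/
noncomputable def ellipCone {n : ℕ} [NeZero n]
    (v : Fin n → EuclideanSpace ℝ (Fin n)) (θ : Fin n → ℝ) :
    Set (EuclideanSpace ℝ (Fin n)) :=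
  {x | Real.sqrt (∑ i ∈ Finset.univ.erase 0, θ i * ⟪v i, x⟫ ^ 2) ≤ ⟪v 0, x⟫}

lemma quad_sub_smul {n : ℕ} (A : Matrix (Fin n) (Fin n) ℝ) (t : ℝ)
    (x : EuclideanSpace ℝ (Fin n)) :
    quadForm (t • (1 : Matrix (Fin n) (Fin n) ℝ) - A) x = t * ‖x‖ ^ 2 - quadForm A x := by
  have h1 : Matrix.toEuclideanLin (t • (1 : Matrix (Fin n) (Fin n) ℝ) - A) x
      = t • x - Matrix.toEuclideanLin A x := by
    rw [map_sub, map_smul, LinearMap.sub_apply, LinearMap.smul_apply]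
    congr 1
    ext i
    simp [Matrix.toEuclideanLin_apply, Matrix.one_mulVec]
  rw [quadForm, h1, inner_sub_left, real_inner_smul_left, real_inner_self_eq_norm_sq, quadForm]

lemma key {n : ℕ} [NeZero n] (hn : 3 ≤ n)
    (K : Set (EuclideanSpace ℝ (Fin n))) (hK : IsProperCone K)
    (A : Matrix (Fin n) (Fin n) ℝ)
    (v : Fin n → EuclideanSpace ℝ (Fin n)) (hv : Orthonormal ℝ v)
    (lam : Fin n → ℝ) (heig : ∀ i, Matrix.toEuclideanLin A (v i) = lam i • v i)
    (hmono : Monotone lam) (h12 : lam 0 < lam 1)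
    (hcop : ∀ x ∈ K, 0 ≤ quadForm (lam 1 • (1 : Matrix (Fin n) (Fin n) ℝ) - A) x)
    (hKL : K ∩ -(ellipCone v fun i => (lam i - lam 1) / (lam 1 - lam 0)) = {0}) :
    ∀ c : ℝ, Convex ℝ (sublevel A K c) := by
  obtain ⟨hcone, hconv, hclosed, hpointed, hint⟩ := hK
  -- an orthonormal basis from the orthonormal family
  have hcard : Fintype.card (Fin n) = Module.finrank ℝ (EuclideanSpace ℝ (Fin n)) := by simp
  let b : OrthonormalBasis (Fin n) ℝ (EuclideanSpace ℝ (Fin n)) :=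
    OrthonormalBasis.mk hv (hv.linearIndependent.span_eq_top_of_card_eq_finrank hcard).ge
  have hb : ∀ i, b i = v i := fun i => by simp [b, OrthonormalBasis.coe_mk]
  have hnorm : ∀ x : EuclideanSpace ℝ (Fin n), ‖x‖ ^ 2 = ∑ i, ⟪v i, x⟫ ^ 2 := by
    intro x
    rw [← real_inner_self_eq_norm_sq, ← b.sum_inner_mul_inner x x]
    refine Finset.sum_congr rfl fun i _ => ?_
    rw [hb, real_inner_comm x (v i), sq]
  have hquad : ∀ x, quadForm A x = ∑ i, lam i * ⟪v i, x⟫ ^ 2 := by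
    intro x
    have hx : Matrix.toEuclideanLin A x = ∑ i, (lam i * ⟪v i, x⟫) • v i := by
      conv_lhs => rw [← b.sum_repr' x]
      rw [map_sum]
      refine Finset.sum_congr rfl fun i _ => ?_
      rw [hb, map_smul, heig i, smul_smul, mul_comm]
    rw [quadForm, hx, sum_inner]
    refine Finset.sum_congr rfl fun i _ => ?_
    rw [real_inner_smul_left]; ring
  have hdiff : ∀ (d : ℝ) (x : EuclideanSpace ℝ (Fin n)),
      ∑ i, (lam i - d) * ⟪v i, x⟫ ^ 2 = quadForm A x - d * ‖x‖ ^ 2 := by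
    intro d x
    rw [hquad, hnorm, Finset.mul_sum, ← Finset.sum_sub_distrib]
    exact Finset.sum_congr rfl fun i _ => by ring
  have hsplit : ∀ f : Fin n → ℝ, ∑ i ∈ Finset.univ.erase 0, f i = (∑ i, f i) - f 0 := by
    intro f
    rw [← Finset.sum_erase_add Finset.univ f (Finset.mem_univ 0)]
    ring
  have hlam1le : ∀ i : Fin n, i ≠ 0 → lam 1 ≤ lam i := by
    intro i hi
    refine hmono ?_
    have hvne : i.val ≠ 0 := by
      intro h
      exact hi (Fin.ext (by simpa using h))
    rw [Fin.le_def]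
    have h1 : (1 : Fin n).val = 1 % n := Fin.val_one' n
    have h0 : ((0 : Fin n) : ℕ) = 0 := by simp
    have hmod : 1 % n = 1 := Nat.mod_eq_of_lt (by omega)
    omega
  -- 0 is not in the interior of K
  have h0ni : (0 : EuclideanSpace ℝ (Fin n)) ∉ interior K := by
    intro h0
    obtain ⟨ε, hε, hball⟩ := Metric.mem_nhds_iff.1 (mem_interior_iff_mem_nhds.1 h0)
    have hv0 : ‖v 0‖ = 1 := hv.1 0
    have hmem : ∀ t : ℝ, |t| < ε → t • v 0 ∈ K := by
      intro t ht
      refine hball ?_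
      rw [mem_ball_zero_iff, norm_smul, Real.norm_eq_abs, hv0, mul_one]
      exact ht
    have habs : |ε / 2| < ε := by rw [abs_of_pos (by linarith)]; linarith
    have h1 : (ε / 2) • v 0 ∈ K := hmem _ habs
    have h2 : -((ε / 2) • v 0) ∈ K := by
      have := hmem (-(ε / 2)) (by rwa [abs_neg])
      rwa [neg_smul] at this
    have h3 : (ε / 2) • v 0 ∈ K ∩ -K := ⟨h1, by rwa [Set.mem_neg]⟩
    have h4 : (ε / 2) • v 0 = 0 := hpointed h3
    have h5 : v 0 = 0 := by
      rcases smul_eq_zero.1 h4 with h | h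
      · exact absurd h (by positivity)
      · exact h
    rw [h5, norm_zero] at hv0
    norm_num at hv0
  have hne0 : ∀ x ∈ interior K, x ≠ 0 := by
    intro x hx h
    exact h0ni (h ▸ hx)
  -- the sign condition on the interior
  have hsign : ∀ x ∈ interior K, 0 ≤ ⟪v 0, x⟫ := by
    intro x hx
    by_contra hneg
    push_neg at hneg
    have hxK : x ∈ K := interior_subset hx
    have hc := hcop x hxK
    rw [quad_sub_smul] at hc
    have hS : ∑ i ∈ Finset.univ.erase 0, (lam i - lam 1) * ⟪v i, x⟫ ^ 2
        ≤ (lam 1 - lam 0) * ⟪v 0, x⟫ ^ 2 := by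
      rw [hsplit]
      have h1 := hdiff (lam 1) x
      nlinarith [h1, hc]
    have hd : (0 : ℝ) < lam 1 - lam 0 := by linarith
    have hθ : ∑ i ∈ Finset.univ.erase 0,
        ((lam i - lam 1) / (lam 1 - lam 0)) * ⟪v i, x⟫ ^ 2 ≤ ⟪v 0, x⟫ ^ 2 := by
      have heq : ∑ i ∈ Finset.univ.erase 0,
          ((lam i - lam 1) / (lam 1 - lam 0)) * ⟪v i, x⟫ ^ 2
          = (∑ i ∈ Finset.univ.erase 0, (lam i - lam 1) * ⟪v i, x⟫ ^ 2) / (lam 1 - lam 0) := by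
        rw [Finset.sum_div]
        exact Finset.sum_congr rfl fun i _ => by ring
      rw [heq, div_le_iff₀ hd]
      nlinarith [hS]
    have hmemL : x ∈ -(ellipCone v fun i => (lam i - lam 1) / (lam 1 - lam 0)) := by
      rw [Set.mem_neg]
      show Real.sqrt (∑ i ∈ Finset.univ.erase 0,
          ((lam i - lam 1) / (lam 1 - lam 0)) * ⟪v i, -x⟫ ^ 2) ≤ ⟪v 0, -x⟫
      have hsum : ∑ i ∈ Finset.univ.erase 0,
          ((lam i - lam 1) / (lam 1 - lam 0)) * ⟪v i, -x⟫ ^ 2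
          = ∑ i ∈ Finset.univ.erase 0,
          ((lam i - lam 1) / (lam 1 - lam 0)) * ⟪v i, x⟫ ^ 2 := by
        refine Finset.sum_congr rfl fun i _ => ?_
        rw [inner_neg_right, neg_sq]
      rw [hsum, inner_neg_right]
      calc Real.sqrt (∑ i ∈ Finset.univ.erase 0,
            ((lam i - lam 1) / (lam 1 - lam 0)) * ⟪v i, x⟫ ^ 2)
          ≤ Real.sqrt (⟪v 0, x⟫ ^ 2) := Real.sqrt_le_sqrt hθ
        _ = |⟪v 0, x⟫| := Real.sqrt_sq_eq_abs _
        _ = -⟪v 0, x⟫ := abs_of_neg hneg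
    have : x = 0 := by
      have : x ∈ K ∩ -(ellipCone v fun i => (lam i - lam 1) / (lam 1 - lam 0)) := ⟨hxK, hmemL⟩
      rw [hKL] at this
      exact this
    exact hne0 x hx this
  intro c
  rcases lt_or_ge c (lam 0) with hc0 | hc0
  · -- empty sublevel set
    have hempty : sublevel A K c = ∅ := by
      ext x
      simp only [sublevel, Set.mem_setOf_eq, Set.mem_empty_iff_false, iff_false, not_and]
      intro hx hq
      have hxpos : 0 < ‖x‖ := norm_pos_iff.2 (hne0 x hx)
      have hge : lam 0 * ‖x‖ ^ 2 ≤ quadForm A x := by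
        rw [hquad, hnorm, Finset.mul_sum]
        refine Finset.sum_le_sum fun i _ => ?_
        have h0i : (0 : Fin n) ≤ i := by rw [Fin.le_def]; exact Nat.zero_le _
        have := hmono h0i
        nlinarith [sq_nonneg ⟪v i, x⟫]
      have hprod := mul_pos (sub_pos.2 hc0) (pow_pos hxpos 2)
      linarith
    rw [hempty]
    exact convex_empty
  rcases le_or_gt (lam 1) c with hc1 | hc1
  · -- the sublevel set is the whole interior
    have hfull : sublevel A K c = interior K := by
      ext x
      simp only [sublevel, Set.mem_setOf_eq]
      refine ⟨fun h => h.1, fun hx => ⟨hx, ?_⟩⟩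
      have := hcop x (interior_subset hx)
      rw [quad_sub_smul] at this
      nlinarith [sq_nonneg ‖x‖]
    rw [hfull]
    exact hconv.interior
  -- the middle case : lam 0 ≤ c < lam 1
  set s := Real.sqrt (c - lam 0) with hs
  set W : EuclideanSpace ℝ (Fin n) → EuclideanSpace ℝ (Fin n) :=
    fun x => WithLp.toLp 2 (fun i => if i = 0 then 0 else Real.sqrt (lam i - c) * ⟪v i, x⟫) with hWdef
  have hWapp : ∀ (x : EuclideanSpace ℝ (Fin n)) (i : Fin n),
      W x i = if i = 0 then 0 else Real.sqrt (lam i - c) * ⟪v i, x⟫ := fun x i => rfl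
  have hWnorm : ∀ x, ‖W x‖ ^ 2 = ∑ i ∈ Finset.univ.erase 0, (lam i - c) * ⟪v i, x⟫ ^ 2 := by
    intro x
    have h1 : ‖W x‖ ^ 2 = ∑ i, ‖W x i‖ ^ 2 := by
      rw [EuclideanSpace.norm_eq, Real.sq_sqrt (Finset.sum_nonneg fun i _ => sq_nonneg _)]
    rw [h1, ← Finset.sum_erase_add Finset.univ _ (Finset.mem_univ (0 : Fin n))]
    have h0 : ‖W x 0‖ ^ 2 = 0 := by rw [hWapp]; simp
    rw [h0, add_zero]
    refine Finset.sum_congr rfl fun i hi => ?_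
    have hi0 : i ≠ 0 := Finset.ne_of_mem_erase hi
    rw [hWapp]
    simp only [hi0, if_false, Real.norm_eq_abs]
    have hnn : 0 ≤ lam i - c := by
      have := hlam1le i hi0
      linarith
    rw [sq_abs, mul_pow, Real.sq_sqrt hnn]
  have hWlin : ∀ (a b : ℝ) (x y : EuclideanSpace ℝ (Fin n)),
      W (a • x + b • y) = a • W x + b • W y := by
    intro a b' x y
    ext i
    have : (a • W x + b' • W y) i = a * W x i + b' * W y i := rfl
    rw [this, hWapp, hWapp, hWapp]
    by_cases hi : i = 0
    · simp [hi]
    · simp only [hi, if_false, inner_add_right, inner_smul_right]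
      ring
  have hset : sublevel A K c = interior K ∩ {x | ‖W x‖ ≤ s * ⟪v 0, x⟫} := by
    ext x
    simp only [sublevel, Set.mem_setOf_eq, Set.mem_inter_iff]
    constructor
    · rintro ⟨hx, hq⟩
      refine ⟨hx, ?_⟩
      have h0 : 0 ≤ ⟪v 0, x⟫ := hsign x hx
      have hsum : ∑ i, (lam i - c) * ⟪v i, x⟫ ^ 2 ≤ 0 := by
        rw [hdiff]; linarith
      have h1 : ‖W x‖ ^ 2 ≤ (c - lam 0) * ⟪v 0, x⟫ ^ 2 := by
        rw [hWnorm, hsplit (fun i => (lam i - c) * ⟪v i, x⟫ ^ 2)]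
        nlinarith [hsum]
      calc ‖W x‖ = Real.sqrt (‖W x‖ ^ 2) := (Real.sqrt_sq (norm_nonneg _)).symm
        _ ≤ Real.sqrt ((c - lam 0) * ⟪v 0, x⟫ ^ 2) := Real.sqrt_le_sqrt h1
        _ = s * ⟪v 0, x⟫ := by
            rw [Real.sqrt_mul (by linarith), Real.sqrt_sq h0]
    · rintro ⟨hx, hle⟩
      refine ⟨hx, ?_⟩
      have hssq : s ^ 2 = c - lam 0 := Real.sq_sqrt (by linarith)
      have h2 : ‖W x‖ ^ 2 ≤ (c - lam 0) * ⟪v 0, x⟫ ^ 2 := by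
        have h3 := mul_self_le_mul_self (norm_nonneg (W x)) hle
        nlinarith [h3, hssq]
      rw [hWnorm] at h2
      have h4 := hsplit (fun i => (lam i - c) * ⟪v i, x⟫ ^ 2)
      have h5 := hdiff c x
      nlinarith [h2, h4, h5]
  rw [hset]
  refine hconv.interior.inter ?_
  intro x hx y hy a b' ha hb hab
  simp only [Set.mem_setOf_eq] at hx hy ⊢
  calc ‖W (a • x + b' • y)‖ = ‖a • W x + b' • W y‖ := by rw [hWlin]
    _ ≤ ‖a • W x‖ + ‖b' • W y‖ := norm_add_le _ _
    _ = a * ‖W x‖ + b' * ‖W y‖ := by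
        rw [norm_smul, norm_smul, Real.norm_eq_abs, Real.norm_eq_abs,
          abs_of_nonneg ha, abs_of_nonneg hb]
    _ ≤ a * (s * ⟪v 0, x⟫) + b' * (s * ⟪v 0, y⟫) := by
        exact add_le_add (mul_le_mul_of_nonneg_left hx ha) (mul_le_mul_of_nonneg_left hy hb)
    _ = s * ⟪v 0, a • x + b' • y⟫ := by
        rw [inner_add_right, inner_smul_right, inner_smul_right]
        ring

/-- Corollary 4 of the paper: if `λ₂ ≤ (λ₁ + λ₃)/2`, `λ₂Iₙ - A` is `K`-copositive and
`K ∩ (-L_{λ₂}) = {0}` or `K ∩ L_{λ₂} = {0}`, then all sublevel sets `[φ_A ≤ c]` are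
convex (i.e. `q_A` is spherically quasi-convex). -/
theorem stmt13 (n : ℕ) [NeZero n] (hn : 3 ≤ n)
    (K : Set (EuclideanSpace ℝ (Fin n))) (hK : IsProperCone K) (hsub : K ⊆ dualCone K)
    (A : Matrix (Fin n) (Fin n) ℝ) (hA : A.IsSymm)
    (v : Fin n → EuclideanSpace ℝ (Fin n)) (hv : Orthonormal ℝ v)
    (lam : Fin n → ℝ) (heig : ∀ i, Matrix.toEuclideanLin A (v i) = lam i • v i)
    (hmono : Monotone lam) (h12 : lam 0 < lam 1)
    (h123 : lam 1 ≤ (lam 0 + lam 2) / 2)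
    (hcop : ∀ x ∈ K, 0 ≤ quadForm (lam 1 • (1 : Matrix (Fin n) (Fin n) ℝ) - A) x) :
    let L := ellipCone v (fun i => (lam i - lam 1) / (lam 1 - lam 0))
    (K ∩ -L = {0} ∨ K ∩ L = {0}) → ∀ c : ℝ, Convex ℝ (sublevel A K c) := by
  intro L hL c
  rcases hL with h | h
  · exact key hn K hK A v hv lam heig hmono h12 hcop h c
  · -- flip the first eigenvector
    set v' : Fin n → EuclideanSpace ℝ (Fin n) := fun i => if i = 0 then -v 0 else v i with hv'def
    have hv'app : ∀ i, v' i = if i = 0 then -v 0 else v i := fun i => rfl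
    have hv'' := orthonormal_iff_ite.1 hv
    have hv' : Orthonormal ℝ v' := by
      rw [orthonormal_iff_ite]
      intro i j
      rcases eq_or_ne i 0 with hi | hi <;> rcases eq_or_ne j 0 with hj | hj
      · subst hi; subst hj
        simp [hv'app, inner_neg_neg, hv'' 0 0, hv.1 0]
      · subst hi
        have h0j : ¬ (0 : Fin n) = j := fun hh => hj hh.symm
        simp [hv'app, hj, h0j, inner_neg_left, hv'' 0 j]
      · subst hj
        simp [hv'app, hi, inner_neg_right, hv'' i 0]
      · simp [hv'app, hi, hj, hv'' i j]
    have heig' : ∀ i, Matrix.toEuclideanLin A (v' i) = lam i • v' i := by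
      intro i
      by_cases hi : i = 0
      · simp only [hv'app, hi, if_true, map_neg, heig 0, smul_neg]
      · simp only [hv'app, hi, if_false, heig i]
    have hLflip : ellipCone v' (fun i => (lam i - lam 1) / (lam 1 - lam 0)) = -L := by
      ext x
      simp only [ellipCone, Set.mem_neg, Set.mem_setOf_eq, L]
      have hsum : ∑ i ∈ Finset.univ.erase 0,
          ((lam i - lam 1) / (lam 1 - lam 0)) * ⟪v' i, x⟫ ^ 2
          = ∑ i ∈ Finset.univ.erase 0,
          ((lam i - lam 1) / (lam 1 - lam 0)) * ⟪v i, -x⟫ ^ 2 := by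
        refine Finset.sum_congr rfl fun i hi => ?_
        have hi0 : i ≠ 0 := Finset.ne_of_mem_erase hi
        rw [hv'app]
        simp only [hi0, if_false, inner_neg_right, neg_sq]
      rw [hsum]
      have : ⟪v' 0, x⟫ = ⟪v 0, -x⟫ := by
        rw [hv'app]
        simp [inner_neg_left, inner_neg_right]
      rw [this]
    have hKL' : K ∩ -(ellipCone v' fun i => (lam i - lam 1) / (lam 1 - lam 0)) = {0} := by
      rw [hLflip, neg_neg]
      exact h
    exact key hn K hK A v' hv' lam heig' hmono h12 hcop hKL' c
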